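/- Let L be a free ℤ-module of finite rank equipped with a symmetric bilinear form B : L × L → ℤ whose extension to L ⊗ ℝ has signature (1, k), i.e. there is a real basis e₀, …, e_k of L ⊗ ℝ with B(eᵢ,eⱼ) = 0 for i ≠ j, B(e₀,e₀) > 0, and B(eᵢ,eᵢ) < 0 for i ≥ 1. Let h ∈ L with B(h,h) > 0. Then the group {f : L ≃ L ℤ-linear : B(f v, f w) = B(v,w) for all v, w, and f(h) = h} is finite. -/

import Mathlib

open TensorProduct

lemma key' (p q sa sb P : ℝ) (hsa : 0 ≤ sa) (hsb : 0 ≤ sb)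
    (hcs : P^2 ≤ sa^2*sb^2) (hT : sb^2 < q^2) (hx : 0 < p^2 + sa^2) :
    0 < 2*(p*q+P)^2 - (q^2-sb^2)*(p^2-sa^2) := by
  have hP : |P| ≤ sa*sb := by
    have h1 : |P| ≤ |sa*sb| := by
      rw [← Real.sqrt_sq_eq_abs, ← Real.sqrt_sq_eq_abs]
      exact Real.sqrt_le_sqrt (by nlinarith)
    rwa [abs_of_nonneg (mul_nonneg hsa hsb)] at h1
  have hP1 := abs_le.mp hP
  rcases lt_or_ge (p^2) (sa^2) with hS | hS
  · nlinarith [sq_nonneg (p*q+P), mul_pos (sub_pos.2 hT) (sub_pos.2 hS)]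
  · have habs : sa*sb ≤ |p*q| := by
      rw [← Real.sqrt_sq_eq_abs]
      rw [show sa*sb = Real.sqrt ((sa*sb)^2) from
        (Real.sqrt_sq (mul_nonneg hsa hsb)).symm]
      exact Real.sqrt_le_sqrt (by nlinarith)
    rcases eq_or_lt_of_le hS with hS0 | hS0
    · have hne : p*q+P ≠ 0 := by
        intro h0
        rcases abs_cases (p*q) with ⟨he, _⟩ | ⟨he, _⟩ <;> nlinarith
      have : 0 < (p*q+P)^2 := lt_of_le_of_ne (sq_nonneg _) (Ne.symm (pow_ne_zero 2 hne))
      nlinarith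
    · have hTS : 0 < (q^2-sb^2)*(p^2-sa^2) := mul_pos (by linarith) (by linarith)
      have hrev : (q^2-sb^2)*(p^2-sa^2) ≤ (p*q+P)^2 := by
        rcases abs_cases (p*q) with ⟨he, hpq⟩ | ⟨he, hpq⟩
        · nlinarith [sq_nonneg (sa*q - p*sb),
            mul_nonneg (by linarith : (0:ℝ) ≤ P + sa*sb) (by linarith : (0:ℝ) ≤ p*q - sa*sb)]
        · nlinarith [sq_nonneg (sa*q + p*sb),
            mul_nonneg (by linarith : (0:ℝ) ≤ sa*sb - P) (by linarith : (0:ℝ) ≤ -(p*q) - sa*sb)]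
      linarith

lemma posdef_aux {E : Type*} [AddCommGroup E] [Module ℝ E] (B' : LinearMap.BilinForm ℝ E)
    (k : ℕ) (e : Module.Basis (Fin (k + 1)) ℝ E)
    (horth : ∀ i j : Fin (k + 1), i ≠ j → B' (e i) (e j) = 0)
    (hpos : 0 < B' (e 0) (e 0))
    (hneg : ∀ i : Fin (k + 1), i ≠ 0 → B' (e i) (e i) < 0)
    (hE : E) (hh : 0 < B' hE hE) :
    ∀ x : E, x ≠ 0 → 0 < 2*(B' x hE)^2 - B' hE hE * B' x x := by
  have expand : ∀ x y : E, B' x y = ∑ i, (e.repr x i) * (e.repr y i) * B' (e i) (e i) := by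
    intro x y
    conv_lhs => rw [← e.sum_repr x, ← e.sum_repr y]
    simp_rw [map_sum, map_smul, LinearMap.sum_apply, LinearMap.smul_apply, smul_eq_mul]
    refine Finset.sum_congr rfl fun j _ => ?_
    rw [Finset.sum_eq_single j (fun i _ hij => by rw [horth i j hij, mul_zero])
      (fun hj => absurd (Finset.mem_univ j) hj)]
    ring
  intro x hx
  set a : Fin (k+1) → ℝ := fun i => e.repr x i with ha
  set bc : Fin (k+1) → ℝ := fun i => e.repr hE i with hbc
  set d : Fin (k+1) → ℝ := fun i => B' (e i) (e i) with hd
  set A : ℝ := ∑ i : Fin k, a i.succ ^ 2 * (-(d i.succ)) with hA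
  set Bb : ℝ := ∑ i : Fin k, bc i.succ ^ 2 * (-(d i.succ)) with hBb
  set P : ℝ := ∑ i : Fin k, a i.succ * bc i.succ * d i.succ with hPdef
  have hdneg : ∀ i : Fin k, 0 ≤ -(d i.succ) :=
    fun i => neg_nonneg.2 (hneg i.succ (Fin.succ_ne_zero i)).le
  have hA0 : 0 ≤ A := Finset.sum_nonneg fun i _ => mul_nonneg (sq_nonneg _) (hdneg i)
  have hB0 : 0 ≤ Bb := Finset.sum_nonneg fun i _ => mul_nonneg (sq_nonneg _) (hdneg i)
  have hcs : P^2 ≤ A * Bb := by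
    have hCS := Finset.sum_mul_sq_le_sq_mul_sq Finset.univ
      (fun i : Fin k => a i.succ * Real.sqrt (-(d i.succ)))
      (fun i : Fin k => bc i.succ * Real.sqrt (-(d i.succ)))
    have e1 : ∑ i : Fin k, (a i.succ * Real.sqrt (-(d i.succ))) *
        (bc i.succ * Real.sqrt (-(d i.succ))) = -P := by
      rw [hPdef, ← Finset.sum_neg_distrib]
      refine Finset.sum_congr rfl fun i _ => ?_
      have hs := Real.mul_self_sqrt (hdneg i)
      linear_combination (a i.succ * bc i.succ) * hs
    have e2 : ∑ i : Fin k, (a i.succ * Real.sqrt (-(d i.succ)))^2 = A := by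
      rw [hA]; refine Finset.sum_congr rfl fun i _ => ?_
      rw [mul_pow, Real.sq_sqrt (hdneg i)]
    have e3 : ∑ i : Fin k, (bc i.succ * Real.sqrt (-(d i.succ)))^2 = Bb := by
      rw [hBb]; refine Finset.sum_congr rfl fun i _ => ?_
      rw [mul_pow, Real.sq_sqrt (hdneg i)]
    rw [e1, e2, e3] at hCS
    nlinarith [hCS]
  have hBxh : B' x hE = a 0 * bc 0 * d 0 + P := by
    rw [expand x hE, Fin.sum_univ_succ, hPdef]
  have hsneg : ∑ i : Fin k, bc i.succ * bc i.succ * d i.succ = -Bb := by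
    rw [hBb, ← Finset.sum_neg_distrib]
    exact Finset.sum_congr rfl fun i _ => by ring
  have haneg : ∑ i : Fin k, a i.succ * a i.succ * d i.succ = -A := by
    rw [hA, ← Finset.sum_neg_distrib]
    exact Finset.sum_congr rfl fun i _ => by ring
  have hBhh : B' hE hE = bc 0 ^2 * d 0 - Bb := by
    rw [expand hE hE, Fin.sum_univ_succ, hsneg]; ring
  have hBxx : B' x x = a 0 ^2 * d 0 - A := by
    rw [expand x x, Fin.sum_univ_succ, haneg]; ring
  have hx' : 0 < (a 0 * Real.sqrt (d 0))^2 + (Real.sqrt A)^2 := by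
    rw [Real.sq_sqrt hA0, mul_pow, Real.sq_sqrt hpos.le]
    have : ∃ i, a i ≠ 0 := by
      by_contra hc
      push_neg at hc
      apply hx
      apply e.repr.map_eq_zero_iff.mp
      ext i
      exact hc i
    obtain ⟨i, hi⟩ := this
    rcases Fin.eq_zero_or_eq_succ i with rfl | ⟨j, rfl⟩
    · have h2 : 0 < a 0 ^ 2 := lt_of_le_of_ne (sq_nonneg _) (Ne.symm (pow_ne_zero 2 hi))
      have := mul_pos h2 hpos
      linarith
    · have h2 : 0 < a j.succ ^ 2 := lt_of_le_of_ne (sq_nonneg _) (Ne.symm (pow_ne_zero 2 hi))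
      have h3 : 0 < a j.succ ^2 * (-(d j.succ)) :=
        mul_pos h2 (neg_pos.2 (hneg j.succ (Fin.succ_ne_zero j)))
      have h4 : a j.succ ^2 * (-(d j.succ)) ≤ A :=
        Finset.single_le_sum (f := fun i : Fin k => a i.succ ^2 * (-(d i.succ)))
          (fun i _ => mul_nonneg (sq_nonneg _) (hdneg i)) (Finset.mem_univ j)
      have h5 : 0 ≤ a 0 ^2 * d 0 := mul_nonneg (sq_nonneg _) hpos.le
      linarith
  have hkey := key' (a 0 * Real.sqrt (d 0)) (bc 0 * Real.sqrt (d 0)) (Real.sqrt A) (Real.sqrt Bb) P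
    (Real.sqrt_nonneg _) (Real.sqrt_nonneg _)
    (by rw [Real.sq_sqrt hA0, Real.sq_sqrt hB0]; exact hcs)
    (by rw [Real.sq_sqrt hB0, mul_pow, Real.sq_sqrt hpos.le]; rw [hBhh] at hh; linarith)
    hx'
  have hpq : (a 0 * Real.sqrt (d 0)) * (bc 0 * Real.sqrt (d 0)) = a 0 * bc 0 * d 0 := by
    have hs := Real.mul_self_sqrt hpos.le
    linear_combination (a 0 * bc 0) * hs
  rw [hpq, mul_pow, mul_pow, Real.sq_sqrt hpos.le, Real.sq_sqrt hA0, Real.sq_sqrt hB0] at hkey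
  rw [hBxh, hBhh, hBxx]
  linarith

lemma aux_finite (L : Type*) [AddCommGroup L] [Module ℤ L] [Module.Free ℤ L] [Module.Finite ℤ L]
    (C : L → L → ℤ) (Cb : LinearMap.BilinForm ℝ (ℝ ⊗[ℤ] L))
    (hcompat : ∀ v w : L, Cb ((1:ℝ) ⊗ₜ v) ((1:ℝ) ⊗ₜ w) = (C v w : ℝ))
    (hCpos : ∀ x : ℝ ⊗[ℤ] L, x ≠ 0 → 0 < Cb x x)
    (hCsymm : ∀ x y, Cb x y = Cb y x) :
    ∀ c : ℤ, {v : L | C v v = c}.Finite := by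
  classical
  intro c
  set ι := Module.Free.ChooseBasisIndex ℤ L with hι
  set b : Module.Basis ι ℤ L := Module.Free.chooseBasis ℤ L with hb
  have hCnonneg : ∀ x, 0 ≤ Cb x x := by
    intro x
    by_cases hx : x = 0
    · subst hx; simp
    · exact (hCpos x hx).le
  have hCS : ∀ x y, (Cb x y)^2 ≤ Cb x x * Cb y y := by
    intro x y
    have hq : ∀ t : ℝ, 0 ≤ Cb y y * (t*t) + (2 * Cb x y) * t + Cb x x := by
      intro t
      have h0 := hCnonneg (x + t • y)
      have hexp : Cb (x + t•y) (x + t•y) = Cb y y * (t*t) + (2*Cb x y)*t + Cb x x := by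
        simp only [map_add, map_smul, LinearMap.add_apply, LinearMap.smul_apply, smul_eq_mul]
        rw [hCsymm y x]; ring
      linarith [hexp ▸ h0]
    have hd := discrim_le_zero hq
    rw [discrim] at hd
    nlinarith [hd]
  have hCnd : Cb.Nondegenerate := by
    constructor <;> intro m hm <;> (by_contra h0; exact absurd (hm m) (ne_of_gt (hCpos m h0)))
  have hCisymm : Cb.IsSymm := ⟨fun x y => hCsymm x y⟩
  set d : Module.Basis ι ℝ (ℝ ⊗[ℤ] L) := b.baseChange ℝ with hd
  set dd : Module.Basis ι ℝ (ℝ ⊗[ℤ] L) := Cb.dualBasis hCnd d with hdd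
  have hcoord : ∀ (v : L) (i : ι), Cb ((1:ℝ) ⊗ₜ v) (dd i) = (b.repr v i : ℝ) := by
    intro v i
    have hv : (1:ℝ) ⊗ₜ[ℤ] v = ∑ j, ((b.repr v j : ℝ)) • d j := by
      rw [← d.sum_repr ((1:ℝ) ⊗ₜ[ℤ] v)]
      refine Finset.sum_congr rfl fun j _ => ?_
      rw [hd, Module.Basis.baseChange_repr_tmul]
      norm_num
    rw [hv, map_sum, LinearMap.sum_apply]
    rw [Finset.sum_eq_single i]
    · rw [map_smul, LinearMap.smul_apply,
        LinearMap.BilinForm.apply_dualBasis_right hCnd hCisymm d i i]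
      simp
    · intro j _ hj
      rw [map_smul, LinearMap.smul_apply,
        LinearMap.BilinForm.apply_dualBasis_right hCnd hCisymm d j i]
      simp [hj]
    · intro hi; exact absurd (Finset.mem_univ i) hi
  set N : ι → ℤ := fun i => max 0 ⌈(c : ℝ) * Cb (dd i) (dd i)⌉ with hN
  have hsub : {v : L | C v v = c} ⊆
      (fun v : L => fun i => b.repr v i) ⁻¹' (Set.pi Set.univ fun i => Set.Icc (-(N i)) (N i)) := by
    intro v hv
    intro i _
    have hv' : C v v = c := hv
    have hCvv : Cb ((1:ℝ) ⊗ₜ v) ((1:ℝ) ⊗ₜ v) = (c : ℝ) := by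
      rw [hcompat, hv']
    have h1 : ((b.repr v i : ℝ))^2 ≤ (c:ℝ) * Cb (dd i) (dd i) := by
      have := hCS ((1:ℝ) ⊗ₜ v) (dd i)
      rw [hcoord, hCvv] at this
      exact this
    have h2 : ((b.repr v i)^2 : ℤ) ≤ N i := by
      have h3 : ((b.repr v i : ℝ))^2 ≤ (⌈(c : ℝ) * Cb (dd i) (dd i)⌉ : ℝ) :=
        le_trans h1 (Int.le_ceil _)
      have h4 : ((b.repr v i)^2 : ℤ) ≤ ⌈(c : ℝ) * Cb (dd i) (dd i)⌉ := by exact_mod_cast h3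
      exact le_trans h4 (le_max_right _ _)
    have h5 : |b.repr v i| ≤ N i := by
      rcases eq_or_ne (b.repr v i) 0 with h0 | h0
      · rw [h0]; simp only [abs_zero]; exact le_max_left _ _
      · have : (1:ℤ) ≤ |b.repr v i| := Int.one_le_abs h0
        calc |b.repr v i| = |b.repr v i| * 1 := (mul_one _).symm
        _ ≤ |b.repr v i| * |b.repr v i| := by
            exact mul_le_mul_of_nonneg_left this (abs_nonneg _)
        _ = (b.repr v i)^2 := by rw [← abs_mul, abs_mul_self, ← sq]
        _ ≤ N i := h2
    rw [Set.mem_Icc]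
    exact abs_le.mp h5
  have hinj : Function.Injective (fun v : L => fun i => b.repr v i) := by
    intro v w hvw
    apply b.repr.injective
    ext i
    exact congrFun hvw i
  exact Set.Finite.subset
    (Set.Finite.preimage hinj.injOn (Set.Finite.pi fun i => Set.finite_Icc _ _)) hsub

/-- Let `L` be a free `ℤ`-module of finite rank with a symmetric bilinear form
`B` whose extension to `L ⊗ ℝ` has signature `(1, k)`, and let `h ∈ L` with `B(h,h) > 0`. Then
the group of `ℤ`-linear automorphisms of `L` preserving `B` and fixing `h` is finite. -/
theorem finite_stabilizer_of_positive_vector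
    (L : Type*) [AddCommGroup L] [Module ℤ L] [Module.Free ℤ L] [Module.Finite ℤ L]
    (B : LinearMap.BilinForm ℤ L)
    (hsymm : ∀ v w : L, B v w = B w v)
    (k : ℕ) (e : Module.Basis (Fin (k + 1)) ℝ (ℝ ⊗[ℤ] L))
    (horth : ∀ i j : Fin (k + 1), i ≠ j → (B.baseChange ℝ) (e i) (e j) = 0)
    (hpos : 0 < (B.baseChange ℝ) (e 0) (e 0))
    (hneg : ∀ i : Fin (k + 1), i ≠ 0 → (B.baseChange ℝ) (e i) (e i) < 0)
    (h : L) (hh : 0 < B h h) :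
    Finite {f : L ≃ₗ[ℤ] L // (∀ v w : L, B (f v) (f w) = B v w) ∧ f h = h} := by
  classical
  set B' := B.baseChange ℝ with hB'
  set hE : ℝ ⊗[ℤ] L := (1:ℝ) ⊗ₜ[ℤ] h with hhE
  have hcast : ∀ v w : L, B' ((1:ℝ) ⊗ₜ v) ((1:ℝ) ⊗ₜ w) = (B v w : ℝ) := by
    intro v w
    simp [hB', LinearMap.BilinForm.baseChange_tmul]
  have hhEpos : 0 < B' hE hE := by
    rw [hhE, hcast]; exact_mod_cast hh
  have hposE := posdef_aux B' k e horth hpos hneg hE hhEpos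
  have hB'symm : ∀ x y : ℝ ⊗[ℤ] L, B' x y = B' y x := by
    have hBsymm : LinearMap.IsSymm B := ⟨fun v w => hsymm v w⟩
    have h2 := LinearMap.BilinForm.IsSymm.baseChange (A := ℝ) hBsymm
    intro x y
    exact h2.eq x y
  set Cb : LinearMap.BilinForm ℝ (ℝ ⊗[ℤ] L) := LinearMap.mk₂ ℝ
    (fun x y => 2*(B' x hE)*(B' y hE) - B' hE hE * B' x y)
    (by intro m₁ m₂ n; simp only [map_add, LinearMap.add_apply]; ring)
    (by intro c m n; simp only [map_smul, LinearMap.smul_apply, smul_eq_mul]; ring)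
    (by intro m n₁ n₂; simp only [map_add, LinearMap.add_apply]; ring)
    (by intro c m n; simp only [map_smul, LinearMap.smul_apply, smul_eq_mul]; ring)
    with hCb
  have happly : ∀ x y, Cb x y = 2*(B' x hE)*(B' y hE) - B' hE hE * B' x y :=
    fun x y => rfl
  have hCsymm : ∀ x y, Cb x y = Cb y x := by
    intro x y; rw [happly, happly, hB'symm x y]; ring
  have hCpos : ∀ x : ℝ ⊗[ℤ] L, x ≠ 0 → 0 < Cb x x := by
    intro x hx
    have e0 : Cb x x = 2*(B' x hE)^2 - B' hE hE * B' x x := by rw [happly]; ring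
    rw [e0]; exact hposE x hx
  set Cint : L → L → ℤ := fun v w => 2*(B v h)*(B w h) - (B h h)*(B v w) with hCint
  have hcompat : ∀ v w : L, Cb ((1:ℝ) ⊗ₜ v) ((1:ℝ) ⊗ₜ w) = (Cint v w : ℝ) := by
    intro v w
    rw [happly, hhE, hcast v h, hcast w h, hcast h h, hcast v w, hCint]
    push_cast
    ring
  have hfin := aux_finite L Cint Cb hcompat hCpos hCsymm
  set ι := Module.Free.ChooseBasisIndex ℤ L with hι
  set b : Module.Basis ι ℤ L := Module.Free.chooseBasis ℤ L with hb
  haveI hFin : ∀ i : ι, Finite {v : L // Cint v v = Cint (b i) (b i)} :=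
    fun i => (hfin (Cint (b i) (b i))).to_subtype
  set Φ : {f : L ≃ₗ[ℤ] L // (∀ v w : L, B (f v) (f w) = B v w) ∧ f h = h} →
      (∀ i : ι, {v : L // Cint v v = Cint (b i) (b i)}) := fun f => fun i =>
    ⟨f.1 (b i), by
      have hBh : ∀ v : L, B (f.1 v) h = B v h := fun v =>
        ((congrArg (fun z => B (f.1 v) z) f.2.2).symm).trans (f.2.1 v h)
      simp only [hCint]
      rw [hBh (b i), f.2.1 (b i) (b i)]⟩ with hΦ
  have hΦinj : Function.Injective Φ := by
    intro f g hfg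
    apply Subtype.ext
    apply LinearEquiv.toLinearMap_injective
    apply b.ext
    intro i
    have h1 := congrFun hfg i
    have h2 := congrArg Subtype.val h1
    exact h2
  exact Finite.of_injective Φ hΦinj
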